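/- For fixed constants 0 < π < 1, α, β ∈ (0,1), the function F(f) = (1/(1−β)) · ∫_{−z_{1−β}}^∞ Φ((1−π)(u + z_{1−α} + z_{1−β})/√(1/f − 1)) φ(u) du is strictly increasing in f on the interval (0,1), where Φ and φ are the standard normal CDF and density, and z_p = Φ⁻¹(p). -/

import Mathlib

open MeasureTheory

/-- Standard normal density. -/
noncomputable def stdNormalPdf (t : ℝ) : ℝ :=
  (Real.sqrt (2 * Real.pi))⁻¹ * Real.exp (-(t ^ 2) / 2)

/-- Standard normal cumulative distribution function. -/
noncomputable def stdNormalCdf (x : ℝ) : ℝ := ∫ t in Set.Iic x, stdNormalPdf t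

lemma pdf_pos (t : ℝ) : 0 < stdNormalPdf t := by
  unfold stdNormalPdf
  positivity

lemma pdf_cont : Continuous stdNormalPdf := by
  unfold stdNormalPdf
  continuity

lemma pdf_integrable : Integrable stdNormalPdf := by
  have h : Integrable (fun t : ℝ => Real.exp (-(1/2 : ℝ) * t ^ 2)) :=
    integrable_exp_neg_mul_sq (by norm_num)
  have : stdNormalPdf = fun t => (Real.sqrt (2 * Real.pi))⁻¹ * Real.exp (-(1/2 : ℝ) * t ^ 2) := by
    funext t; unfold stdNormalPdf; ring_nf
  rw [this]
  exact h.const_mul _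

lemma pdf_total : ∫ t, stdNormalPdf t = 1 := by
  have h : ∫ t : ℝ, Real.exp (-(1/2 : ℝ) * t ^ 2) = Real.sqrt (Real.pi / (1/2)) :=
    integral_gaussian (1/2)
  have e : stdNormalPdf = fun t => (Real.sqrt (2 * Real.pi))⁻¹ * Real.exp (-(1/2 : ℝ) * t ^ 2) := by
    funext t; unfold stdNormalPdf; ring_nf
  rw [e, MeasureTheory.integral_const_mul, h]
  rw [show Real.pi / (1/2) = 2 * Real.pi by ring]
  rw [inv_mul_cancel₀]
  positivity

lemma pdf_neg (t : ℝ) : stdNormalPdf (-t) = stdNormalPdf t := by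
  unfold stdNormalPdf; ring_nf

lemma pdf_anti {x y : ℝ} (h : |x| ≤ |y|) : stdNormalPdf y ≤ stdNormalPdf x := by
  unfold stdNormalPdf
  have hsq : x ^ 2 ≤ y ^ 2 := by
    have := sq_abs x ▸ sq_abs y ▸ pow_le_pow_left₀ (abs_nonneg x) h 2
    simpa [sq_abs] using this
  have : Real.exp (-(y ^ 2) / 2) ≤ Real.exp (-(x ^ 2) / 2) :=
    Real.exp_le_exp.mpr (by linarith)
  have hc : (0:ℝ) ≤ (Real.sqrt (2 * Real.pi))⁻¹ := by positivity
  exact mul_le_mul_of_nonneg_left this hc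

lemma cdf_sub (a b : ℝ) :
    stdNormalCdf b - stdNormalCdf a = ∫ x in a..b, stdNormalPdf x :=
  intervalIntegral.integral_Iic_sub_Iic pdf_integrable.integrableOn pdf_integrable.integrableOn

lemma cdf_strictMono : StrictMono stdNormalCdf := by
  intro a b hab
  have h : 0 < ∫ x in a..b, stdNormalPdf x :=
    intervalIntegral.intervalIntegral_pos_of_pos pdf_integrable.intervalIntegrable pdf_pos hab
  have := cdf_sub a b
  linarith

lemma cdf_mono : Monotone stdNormalCdf := cdf_strictMono.monotone

lemma cdf_nonneg (x : ℝ) : 0 ≤ stdNormalCdf x :=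
  setIntegral_nonneg measurableSet_Iic (fun t _ => (pdf_pos t).le)

lemma cdf_le_one (x : ℝ) : stdNormalCdf x ≤ 1 := by
  have := setIntegral_le_integral (s := Set.Iic x) pdf_integrable
    (Filter.Eventually.of_forall (fun t => (pdf_pos t).le))
  rw [pdf_total] at this
  exact this

lemma cdf_neg (x : ℝ) : stdNormalCdf (-x) = 1 - stdNormalCdf x := by
  have h1 : (∫ t in Set.Iic x, stdNormalPdf (-t)) = ∫ t in Set.Ioi (-x), stdNormalPdf t :=
    integral_comp_neg_Iic x stdNormalPdf
  have h2 : (∫ t in Set.Iic x, stdNormalPdf (-t)) = stdNormalCdf x := by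
    unfold stdNormalCdf; simp_rw [pdf_neg]
  have h3 : stdNormalCdf (-x) + ∫ t in Set.Ioi (-x), stdNormalPdf t = 1 := by
    unfold stdNormalCdf
    rw [intervalIntegral.integral_Iic_add_Ioi pdf_integrable.integrableOn
      pdf_integrable.integrableOn, pdf_total]
  rw [← h1, h2] at h3
  linarith

lemma cdf_cont : Continuous stdNormalCdf := by
  have h : Continuous (fun x : ℝ => ∫ t in (0:ℝ)..x, stdNormalPdf t) :=
    intervalIntegral.continuous_primitive (fun a b => pdf_integrable.intervalIntegrable) 0
  have : stdNormalCdf = fun x => (∫ t in (0:ℝ)..x, stdNormalPdf t) + stdNormalCdf 0 := by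
    funext x
    have := cdf_sub 0 x
    linarith
  rw [this]
  exact h.add continuous_const


section Key

variable {k1 k2 c : ℝ}

noncomputable def hfun (k1 k2 c : ℝ) (u : ℝ) : ℝ :=
  (stdNormalCdf (k2 * (u + c)) - stdNormalCdf (k1 * (u + c))) * stdNormalPdf u

lemma hfun_cont : Continuous (hfun k1 k2 c) := by
  unfold hfun
  exact (((cdf_cont.comp (by continuity)).sub (cdf_cont.comp (by continuity))).mul pdf_cont)

lemma hfun_abs_le (u : ℝ) : |hfun k1 k2 c u| ≤ stdNormalPdf u := by
  unfold hfun
  rw [abs_mul, abs_of_pos (pdf_pos u)]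
  have h1 : |stdNormalCdf (k2 * (u + c)) - stdNormalCdf (k1 * (u + c))| ≤ 1 := by
    rw [abs_sub_le_iff]
    constructor <;>
      [have := cdf_nonneg (k1 * (u + c)); have := cdf_nonneg (k2 * (u + c))] <;>
      [have h2 := cdf_le_one (k2 * (u + c)); have h2 := cdf_le_one (k1 * (u + c))] <;> linarith
  nlinarith [pdf_pos u]

lemma hfun_integrable : Integrable (hfun k1 k2 c) :=
  pdf_integrable.mono' hfun_cont.aestronglyMeasurable
    (Filter.Eventually.of_forall hfun_abs_le)

lemma hfun_nonneg (hk : k1 ≤ k2) {u : ℝ} (hu : -c ≤ u) : 0 ≤ hfun k1 k2 c u := by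
  unfold hfun
  have : stdNormalCdf (k1 * (u + c)) ≤ stdNormalCdf (k2 * (u + c)) :=
    cdf_mono (by nlinarith)
  nlinarith [pdf_pos u]

lemma hfun_pos (hk1 : 0 ≤ k1) (hk : k1 < k2) {u : ℝ} (hu : -c < u) : 0 < hfun k1 k2 c u := by
  unfold hfun
  have : stdNormalCdf (k1 * (u + c)) < stdNormalCdf (k2 * (u + c)) :=
    cdf_strictMono (by nlinarith)
  nlinarith [pdf_pos u]

lemma hfun_refl_add (hk1 : 0 ≤ k1) (hk : k1 ≤ k2) (hc : 0 ≤ c) {u : ℝ} (hu : -c ≤ u) :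
    0 ≤ hfun k1 k2 c u + hfun k1 k2 c (-(2*c) - u) := by
  have e2 : k2 * ((-(2*c) - u) + c) = -(k2 * (u + c)) := by ring
  have e1 : k1 * ((-(2*c) - u) + c) = -(k1 * (u + c)) := by ring
  have hrefl : hfun k1 k2 c (-(2*c) - u) =
      -(stdNormalCdf (k2 * (u + c)) - stdNormalCdf (k1 * (u + c))) * stdNormalPdf (2*c + u) := by
    unfold hfun
    rw [e1, e2, cdf_neg, cdf_neg, show -(2*c) - u = -(2*c + u) by ring, pdf_neg]
    ring
  have hpdf : stdNormalPdf (2*c + u) ≤ stdNormalPdf u := by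
    apply pdf_anti
    rw [abs_of_nonneg (by linarith : (0:ℝ) ≤ 2*c + u)]
    exact abs_le.mpr ⟨by linarith, by linarith⟩
  have hg : 0 ≤ stdNormalCdf (k2 * (u + c)) - stdNormalCdf (k1 * (u + c)) := by
    have : stdNormalCdf (k1 * (u + c)) ≤ stdNormalCdf (k2 * (u + c)) :=
      cdf_mono (by nlinarith)
    linarith
  rw [hrefl]
  unfold hfun
  nlinarith

lemma tail_pos (hk1 : 0 ≤ k1) (hk : k1 < k2) {b : ℝ} (hb : -c ≤ b) :
    0 < ∫ u in Set.Ioi b, hfun k1 k2 c u := by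
  have hsplit : (∫ u in Set.Ioi b, hfun k1 k2 c u) =
      (∫ u in Set.Ioc b (b+1), hfun k1 k2 c u) + ∫ u in Set.Ioi (b+1), hfun k1 k2 c u := by
    rw [← setIntegral_union (Set.Ioc_disjoint_Ioi le_rfl) measurableSet_Ioi
      hfun_integrable.integrableOn hfun_integrable.integrableOn,
      Set.Ioc_union_Ioi_eq_Ioi (by linarith : b ≤ b + 1)]
  rw [hsplit]
  have h1 : 0 < ∫ u in Set.Ioc b (b+1), hfun k1 k2 c u := by
    rw [← intervalIntegral.integral_of_le (by linarith : b ≤ b + 1)]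
    apply intervalIntegral.intervalIntegral_pos_of_pos_on hfun_integrable.intervalIntegrable
    · intro x hx
      exact hfun_pos hk1 hk (lt_of_le_of_lt hb hx.1)
    · linarith
  have h2 : 0 ≤ ∫ u in Set.Ioi (b+1), hfun k1 k2 c u :=
    setIntegral_nonneg measurableSet_Ioi
      (fun u hu => hfun_nonneg hk.le (by simp only [Set.mem_Ioi] at hu; linarith))
  linarith

lemma key (hc : 0 < c) (hk1 : 0 ≤ k1) (hk : k1 < k2) (a : ℝ) :
    0 < ∫ u in Set.Ioi a, hfun k1 k2 c u := by
  rcases le_or_gt (-c) a with ha | ha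
  · exact tail_pos hk1 hk ha
  · -- a < -c : split at -c and at b' = -2c - a
    set b' : ℝ := -(2*c) - a with hb'
    have hb'gt : -c < b' := by rw [hb']; linarith
    have hsplit1 : (∫ u in Set.Ioi a, hfun k1 k2 c u) =
        (∫ u in Set.Ioc a (-c), hfun k1 k2 c u) + ∫ u in Set.Ioi (-c), hfun k1 k2 c u := by
      rw [← setIntegral_union (Set.Ioc_disjoint_Ioi le_rfl) measurableSet_Ioi
        hfun_integrable.integrableOn hfun_integrable.integrableOn,
        Set.Ioc_union_Ioi_eq_Ioi ha.le]
    have hsplit2 : (∫ u in Set.Ioi (-c), hfun k1 k2 c u) =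
        (∫ u in Set.Ioc (-c) b', hfun k1 k2 c u) + ∫ u in Set.Ioi b', hfun k1 k2 c u := by
      rw [← setIntegral_union (Set.Ioc_disjoint_Ioi le_rfl) measurableSet_Ioi
        hfun_integrable.integrableOn hfun_integrable.integrableOn,
        Set.Ioc_union_Ioi_eq_Ioi hb'gt.le]
    have hrefl : (∫ u in Set.Ioc a (-c), hfun k1 k2 c u) =
        ∫ x in (-c)..b', hfun k1 k2 c (-(2*c) - x) := by
      rw [intervalIntegral.integral_comp_sub_left (fun x => hfun k1 k2 c x) (-(2*c))]
      have e1 : -(2*c) - b' = a := by rw [hb']; ring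
      have e2 : -(2*c) - -c = -c := by ring
      rw [e1, e2, intervalIntegral.integral_of_le (by linarith : a ≤ -c)]
    have hIoc : (∫ u in Set.Ioc (-c) b', hfun k1 k2 c u) =
        ∫ x in (-c)..b', hfun k1 k2 c x :=
      (intervalIntegral.integral_of_le hb'gt.le).symm
    have hsum : (∫ x in (-c)..b', hfun k1 k2 c (-(2*c) - x)) +
        (∫ x in (-c)..b', hfun k1 k2 c x) =
        ∫ x in (-c)..b', (hfun k1 k2 c (-(2*c) - x) + hfun k1 k2 c x) := by
      rw [← intervalIntegral.integral_add
        ((hfun_integrable.comp_sub_left (-(2*c))).intervalIntegrable ..)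
        hfun_integrable.intervalIntegrable]
    have hnn : 0 ≤ ∫ x in (-c)..b', (hfun k1 k2 c (-(2*c) - x) + hfun k1 k2 c x) := by
      apply intervalIntegral.integral_nonneg hb'gt.le
      intro x hx
      have := hfun_refl_add hk1 hk.le hc.le (hx.1 : -c ≤ x)
      linarith
    have htail : 0 < ∫ u in Set.Ioi b', hfun k1 k2 c u := tail_pos hk1 hk hb'gt.le
    rw [hsplit1, hsplit2, hrefl, hIoc]
    linarith [hsum ▸ hnn]

end Key

lemma gfun_integrable (k c : ℝ) :
    Integrable (fun u => stdNormalCdf (k * (u + c)) * stdNormalPdf u) := by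
  apply pdf_integrable.mono'
  · exact ((cdf_cont.comp (by continuity)).mul pdf_cont).aestronglyMeasurable
  · refine Filter.Eventually.of_forall fun u => ?_
    rw [Real.norm_eq_abs, abs_mul, abs_of_pos (pdf_pos u), abs_of_nonneg (cdf_nonneg _)]
    nlinarith [cdf_le_one (k * (u + c)), pdf_pos u]

/-- The consistency probability of criterion I,
`F(f) = (1/(1-β)) ∫_{-z_{1-β}}^∞ Φ((1-π)(u + z_{1-α} + z_{1-β})/√(1/f - 1)) φ(u) du`,
is strictly increasing in `f` on `(0, 1)`. -/
theorem stmt3 (π α β zα zβ : ℝ)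
    (hπ : π ∈ Set.Ioo (0 : ℝ) 1) (hα : α ∈ Set.Ioo (0 : ℝ) 1) (hβ : β ∈ Set.Ioo (0 : ℝ) 1)
    (hzα : stdNormalCdf zα = 1 - α) (hzβ : stdNormalCdf zβ = 1 - β)
    (hz : 0 < zα + zβ) :
    StrictMonoOn (fun f : ℝ =>
      (1 / (1 - β)) * ∫ u in Set.Ioi (-zβ),
        stdNormalCdf ((1 - π) * (u + zα + zβ) / Real.sqrt (1 / f - 1)) * stdNormalPdf u)
      (Set.Ioo 0 1) := by
  obtain ⟨hπ0, hπ1⟩ := hπ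
  obtain ⟨hβ0, hβ1⟩ := hβ
  intro f1 hf1 f2 hf2 hlt
  have hcoef : 0 < 1 / (1 - β) := by
    have : 0 < 1 - β := by linarith
    positivity
  have hspos : ∀ f ∈ Set.Ioo (0:ℝ) 1, 0 < Real.sqrt (1 / f - 1) := by
    intro f hf
    apply Real.sqrt_pos.mpr
    have h1 : 1 < 1 / f := one_lt_one_div hf.1 hf.2
    linarith
  have hs1 := hspos f1 hf1
  have hs2 := hspos f2 hf2
  have hslt : Real.sqrt (1 / f2 - 1) < Real.sqrt (1 / f1 - 1) := by
    apply Real.sqrt_lt_sqrt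
    · have h1 : 1 < 1 / f2 := one_lt_one_div hf2.1 hf2.2
      linarith
    · have : 1 / f2 < 1 / f1 := one_div_lt_one_div_of_lt hf1.1 hlt
      linarith
  set s1 := Real.sqrt (1 / f1 - 1)
  set s2 := Real.sqrt (1 / f2 - 1)
  set k1 := (1 - π) / s1 with hk1def
  set k2 := (1 - π) / s2 with hk2def
  have hk1nn : 0 ≤ k1 := by
    apply div_nonneg <;> linarith
  have hklt : k1 < k2 := by
    rw [hk1def, hk2def]
    exact div_lt_div_of_pos_left (by linarith) hs2 hslt
  set c := zα + zβ with hcdef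
  have hrw : ∀ s' : ℝ, (fun u : ℝ =>
      stdNormalCdf ((1 - π) * (u + zα + zβ) / s') * stdNormalPdf u) =
      (fun u : ℝ => stdNormalCdf (((1 - π) / s') * (u + c)) * stdNormalPdf u) := by
    intro s'
    funext u
    have : (1 - π) * (u + zα + zβ) / s' = ((1 - π) / s') * (u + c) := by
      rw [hcdef]; ring
    rw [this]
  simp only [hrw (Real.sqrt (1 / f1 - 1)), hrw (Real.sqrt (1 / f2 - 1))]
  apply mul_lt_mul_of_pos_left _ hcoef
  rw [← sub_pos, ← integral_sub (gfun_integrable k2 c).integrableOn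
    (gfun_integrable k1 c).integrableOn]
  have : (fun u : ℝ => stdNormalCdf (k2 * (u + c)) * stdNormalPdf u
      - stdNormalCdf (k1 * (u + c)) * stdNormalPdf u) = hfun k1 k2 c := by
    funext u; unfold hfun; ring
  rw [this]
  exact key hz hk1nn hklt (-zβ)
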